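/- Let α, β be inner functions, k ≥ 1, and φ ∈ L²(𝕋). If φ ∈ conj(αH²) + (W_k*β)H², i.e., φ = conj(α h₁) + β(z^k)·h₂ with h₁, h₂ ∈ H², then the compression U_φ^{α,β} f = P_β W_k(φ f) vanishes on K_α ∩ H^∞, i.e., U_φ^{α,β} = 0. -/

import Mathlib

open MeasureTheory Complex

noncomputable section

instance : Fact ((0:ℝ) < 1) := ⟨one_pos⟩

/-- The unit circle 𝕋, realized additively. -/
abbrev Circ := AddCircle (1:ℝ)
/-- Normalized Haar (Lebesgue) measure on the circle. -/
abbrev μc : Measure Circ := AddCircle.haarAddCircle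
/-- The Lebesgue space L²(𝕋). -/
abbrev L2 := Lp ℂ 2 μc

/-- The basis element "z^n" of L²(𝕋). -/
def e (n : ℤ) : L2 := fourierLp 2 n

/-- The Hardy space H², the closed span of the nonnegative powers of z. -/
def H2 : Submodule ℂ L2 :=
  (Submodule.span ℂ (Set.range fun n : ℕ => e n)).topologicalClosure

/-- The family θ·z^n, n ≥ 0, whose closed span is (the closure of) θH² for inner θ. -/
def thetaSet (θ : Circ → ℂ) : Set L2 :=
  {g | ∃ n : ℕ, ⇑g =ᵐ[μc] fun x => θ x * fourier n x}

/-- The model space K_θ = H² ⊖ θH². -/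
def Kmodel (θ : Circ → ℂ) : Submodule ℂ L2 :=
  H2 ⊓ (Submodule.span ℂ (thetaSet θ))ᗮ

theorem Kmodel_isClosed (θ : Circ → ℂ) : IsClosed (Kmodel θ : Set L2) := by
  have h1 : IsClosed (H2 : Set L2) := Submodule.isClosed_topologicalClosure _
  have h2 : IsClosed ((Submodule.span ℂ (thetaSet θ))ᗮ : Set L2) :=
    Submodule.isClosed_orthogonal _
  have h3 : (Kmodel θ : Set L2) = (H2 : Set L2) ∩ ((Submodule.span ℂ (thetaSet θ))ᗮ : Set L2) := rfl
  rw [h3]; exact h1.inter h2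

instance (θ : Circ → ℂ) : CompleteSpace (Kmodel θ) :=
  (Kmodel_isClosed θ).completeSpace_coe

instance : CompleteSpace H2 :=
  (Submodule.isClosed_topologicalClosure _).completeSpace_coe

/-- The Riesz projection onto H², as an operator on L². -/
def PH2 : L2 →L[ℂ] L2 := H2.subtypeL.comp (Submodule.orthogonalProjection H2)

/-- The orthogonal projection P_θ onto the model space K_θ, as an operator on L². -/
def Pmod (θ : Circ → ℂ) : L2 →L[ℂ] L2 :=
  (Kmodel θ).subtypeL.comp (Submodule.orthogonalProjection (Kmodel θ))

/-- The rank-one operator (u ⊗ v) f = ⟨f, v⟩ u (inner product linear in f). -/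
def rankOne (u v : L2) : L2 →L[ℂ] L2 :=
  (ContinuousLinearMap.toSpanSingleton ℂ u).comp (innerSL ℂ v)

/-- θ is (the boundary function of) an inner function: essentially bounded, of modulus
one a.e., with vanishing negative Fourier coefficients. -/
def IsInnerFun (θ : Circ → ℂ) : Prop :=
  MemLp θ ⊤ μc ∧ (∀ᵐ x ∂μc, ‖θ x‖ = 1) ∧
    ∀ n : ℤ, n < 0 → ∫ x, θ x * (starRingEnd ℂ) (fourier n x) ∂μc = 0

/-- The kernel functions k_{0,j}^θ = P_θ(j! z^j). -/
def kker (θ : Circ → ℂ) (j : ℕ) : L2 := Pmod θ ((j.factorial : ℂ) • e j)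

/-- The compressed shift S_θ = P_θ M_z P_θ (as an operator on L², vanishing on K_θᗮ),
built from the multiplication-by-z operator Mz. -/
def Smod (θ : Circ → ℂ) (Mz : L2 →L[ℂ] L2) : L2 →L[ℂ] L2 :=
  (Pmod θ).comp (Mz.comp (Pmod θ))

/-- W is the k-th order slant shift W_k : z^n ↦ z^(n/k) if k ∣ n, else 0. -/
def IsSlantShift (k : ℕ) (W : L2 →L[ℂ] L2) : Prop :=
  ∀ n : ℤ, W (e n) = if (k:ℤ) ∣ n then e (n / k) else 0

/-- Mz is the multiplication by z on L². -/
def IsMz (Mz : L2 →L[ℂ] L2) : Prop :=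
  ∀ f : L2, ⇑(Mz f) =ᵐ[μc] fun x => fourier 1 x * f x

/-- U agrees with the compression U_φ^{α,β} = P_β W_k(φ ·) on K_α^∞ = K_α ∩ H^∞. -/
def UphiRel (W : L2 →L[ℂ] L2) (α β : Circ → ℂ) (φ : Circ → ℂ) (U : L2 →L[ℂ] L2) : Prop :=
  ∀ f : L2, f ∈ Kmodel α → MemLp (⇑f) ⊤ μc →
    ∀ g : L2, (⇑g =ᵐ[μc] fun x => φ x * f x) → U f = Pmod β (W g)

/-- U belongs to 𝒮_k(α,β): it is a bounded extension of some U_φ^{α,β}, φ ∈ L². -/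
def InSk (W : L2 →L[ℂ] L2) (α β : Circ → ℂ) (U : L2 →L[ℂ] L2) : Prop :=
  ∃ φ : Circ → ℂ, MemLp φ 2 μc ∧ UphiRel W α β φ U

/-- Sstar acts as the backward shift on H²: S* f = P(conj z · f). -/
def IsBackwardShift (Sstar : L2 →L[ℂ] L2) : Prop :=
  ∀ f : L2, f ∈ H2 → ∀ g : L2,
    (⇑g =ᵐ[μc] fun x => (starRingEnd ℂ) (fourier 1 x) * f x) → Sstar f = PH2 g

/-- C is the conjugation C_θ f = θ · conj(z f) on L². -/
def IsConjOp (θ : Circ → ℂ) (C : L2 → L2) : Prop :=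
  ∀ f : L2, ⇑(C f) =ᵐ[μc] fun x => θ x * (starRingEnd ℂ) (fourier 1 x * f x)
section Aux

open Submodule

local notation "⟪" x ", " y "⟫" => @inner ℂ _ _ x y

/-- The `j`-th Fourier coefficient functional on `L2`. -/
def coefL (j : ℤ) : L2 →L[ℂ] ℂ := innerSL ℂ (e j)

lemma coefL_apply (j : ℤ) (x : L2) : coefL j x = ⟪e j, x⟫ := rfl

lemma coefL_e (j n : ℤ) : coefL j (e n) = if j = n then 1 else 0 :=
  orthonormal_iff_ite.mp orthonormal_fourier j n

lemma inner_def' (x y : L2) : ⟪x, y⟫ = ∫ a, (starRingEnd ℂ) (x a) * y a ∂μc := by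
  rw [MeasureTheory.L2.inner_def]
  simp only [RCLike.inner_apply]
  exact integral_congr_ae (Filter.Eventually.of_forall fun a => mul_comm _ _)

lemma clm_zero_of_basis (T : L2 →L[ℂ] ℂ) (h : ∀ n : ℤ, T (e n) = 0) (x : L2) : T x = 0 := by
  have h1 : span ℂ (Set.range (fourierLp 2 : ℤ → L2)) ≤ T.ker := by
    rw [span_le]; rintro _ ⟨n, rfl⟩; exact h n
  have h2 := Submodule.topologicalClosure_minimal _ h1 (ContinuousLinearMap.isClosed_ker T)
  rw [span_fourierLp_closure_eq_top (by norm_num)] at h2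
  exact h2 (mem_top (R := ℂ))

lemma clm_eq_of_basis (T S : L2 →L[ℂ] ℂ) (h : ∀ n : ℤ, T (e n) = S (e n)) (x : L2) :
    T x = S x := by
  have := clm_zero_of_basis (T - S) (fun n => by
    simp only [ContinuousLinearMap.sub_apply, h n, sub_self]) x
  simpa [sub_eq_zero] using this

lemma inner_right_closure {S : Set L2} {x : L2} (h : ∀ s ∈ S, ⟪x, s⟫ = 0) :
    ∀ u ∈ (span ℂ S).topologicalClosure, ⟪x, u⟫ = 0 := by
  have h1 : span ℂ S ≤ (innerSL ℂ x).ker := by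
    rw [span_le]; intro s hs; exact h s hs
  have h2 := Submodule.topologicalClosure_minimal _ h1 (ContinuousLinearMap.isClosed_ker _)
  exact fun u hu => h2 hu

lemma map_closure_span (Φ : L2 →L[ℂ] L2) {S S' : Set L2}
    (h : ∀ s ∈ S, Φ s ∈ (span ℂ S').topologicalClosure) :
    ∀ x ∈ (span ℂ S).topologicalClosure, Φ x ∈ (span ℂ S').topologicalClosure := by
  have h1 : span ℂ S ≤ ((span ℂ S').topologicalClosure).comap (Φ : L2 →ₗ[ℂ] L2) := by
    rw [span_le]; intro s hs; exact h s hs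
  have h2 : IsClosed (((span ℂ S').topologicalClosure).comap (Φ : L2 →ₗ[ℂ] L2) : Set L2) :=
    (Submodule.isClosed_topologicalClosure _).preimage Φ.continuous
  exact fun x hx => Submodule.topologicalClosure_minimal _ h1 h2 hx

lemma memLp_conj {g : Circ → ℂ} {p : ENNReal} (hg : MeasureTheory.MemLp g p μc) :
    MeasureTheory.MemLp (fun x => (starRingEnd ℂ) (g x)) p μc := by
  refine ⟨RCLike.continuous_conj.comp_aestronglyMeasurable hg.1, ?_⟩
  rw [MeasureTheory.eLpNorm_congr_norm_ae (g := g) (.of_forall fun x => by simp)]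
  exact hg.2

lemma memLp_mul_left {ψ g : Circ → ℂ} (hψ : MeasureTheory.MemLp ψ ⊤ μc)
    (hg : MeasureTheory.MemLp g 2 μc) :
    MeasureTheory.MemLp (fun x => ψ x * g x) 2 μc :=
  (hg.smul (p := ⊤) (r := 2) hψ).ae_eq (Filter.Eventually.of_forall fun x => by
    simp [Pi.smul_apply', smul_eq_mul])

lemma memLp_mul_right {g ψ : Circ → ℂ} (hg : MeasureTheory.MemLp g 2 μc)
    (hψ : MeasureTheory.MemLp ψ ⊤ μc) :
    MeasureTheory.MemLp (fun x => g x * ψ x) 2 μc :=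
  (memLp_mul_left hψ hg).ae_eq (Filter.Eventually.of_forall fun x => mul_comm _ _)

end Aux
section Aux2

open Submodule

local notation "⟪" x ", " y "⟫" => @inner ℂ _ _ x y

/-- Multiplication by an `L∞` function, as a linear map on `L2`. -/
def mulLM {ψ : Circ → ℂ} (hψ : MeasureTheory.MemLp ψ ⊤ μc) : L2 →ₗ[ℂ] L2 where
  toFun f := (memLp_mul_left hψ (MeasureTheory.Lp.memLp f)).toLp _
  map_add' f g := by
    apply MeasureTheory.Lp.ext
    filter_upwards [MeasureTheory.MemLp.coeFn_toLp
        (memLp_mul_left hψ (MeasureTheory.Lp.memLp (f + g))),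
      MeasureTheory.MemLp.coeFn_toLp (memLp_mul_left hψ (MeasureTheory.Lp.memLp f)),
      MeasureTheory.MemLp.coeFn_toLp (memLp_mul_left hψ (MeasureTheory.Lp.memLp g)),
      MeasureTheory.Lp.coeFn_add f g,
      MeasureTheory.Lp.coeFn_add
        ((memLp_mul_left hψ (MeasureTheory.Lp.memLp f)).toLp _)
        ((memLp_mul_left hψ (MeasureTheory.Lp.memLp g)).toLp _)] with x h1 h2 h3 h4 h5
    rw [h1, h5, Pi.add_apply, h2, h3, h4, Pi.add_apply, mul_add]
  map_smul' c f := by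
    apply MeasureTheory.Lp.ext
    filter_upwards [MeasureTheory.MemLp.coeFn_toLp
        (memLp_mul_left hψ (MeasureTheory.Lp.memLp (c • f))),
      MeasureTheory.MemLp.coeFn_toLp (memLp_mul_left hψ (MeasureTheory.Lp.memLp f)),
      MeasureTheory.Lp.coeFn_smul c f,
      MeasureTheory.Lp.coeFn_smul c ((memLp_mul_left hψ (MeasureTheory.Lp.memLp f)).toLp _)]
        with x h1 h2 h3 h4
    rw [RingHom.id_apply, h1, h4, Pi.smul_apply, h2, h3, Pi.smul_apply, smul_eq_mul,
      smul_eq_mul, mul_left_comm]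

/-- Multiplication by an `L∞` function, as a continuous linear map on `L2`. -/
def mulL {ψ : Circ → ℂ} (hψ : MeasureTheory.MemLp ψ ⊤ μc) : L2 →L[ℂ] L2 :=
  LinearMap.mkContinuous (mulLM hψ) (MeasureTheory.eLpNorm ψ ⊤ μc).toReal (by
    intro f
    have h1 : ‖mulLM hψ f‖ = (MeasureTheory.eLpNorm (fun x => ψ x * f x) 2 μc).toReal :=
      MeasureTheory.Lp.norm_toLp _ (memLp_mul_left hψ (MeasureTheory.Lp.memLp f))
    have h2 : MeasureTheory.eLpNorm (fun x => ψ x * f x) 2 μc ≤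
        MeasureTheory.eLpNorm ψ ⊤ μc * MeasureTheory.eLpNorm (⇑f) 2 μc := by
      have := MeasureTheory.eLpNorm_smul_le_eLpNorm_top_mul_eLpNorm 2
        (MeasureTheory.Lp.aestronglyMeasurable f) ψ (μ := μc)
      exact this
    rw [h1]
    calc (MeasureTheory.eLpNorm (fun x => ψ x * f x) 2 μc).toReal
        ≤ (MeasureTheory.eLpNorm ψ ⊤ μc * MeasureTheory.eLpNorm (⇑f) 2 μc).toReal :=
          ENNReal.toReal_mono
            (ENNReal.mul_ne_top hψ.eLpNorm_ne_top (MeasureTheory.Lp.eLpNorm_ne_top f)) h2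
      _ = (MeasureTheory.eLpNorm ψ ⊤ μc).toReal * ‖f‖ := by
          rw [ENNReal.toReal_mul]; rfl)

lemma coeFn_mulL {ψ : Circ → ℂ} (hψ : MeasureTheory.MemLp ψ ⊤ μc) (f : L2) :
    ⇑(mulL hψ f) =ᵐ[μc] fun x => ψ x * f x :=
  MeasureTheory.MemLp.coeFn_toLp (memLp_mul_left hψ (MeasureTheory.Lp.memLp f))

end Aux2
section Aux3

open Submodule

local notation "⟪" x ", " y "⟫" => @inner ℂ _ _ x y

lemma memLp_fourier (m : ℤ) : MeasureTheory.MemLp (fun x : Circ => fourier m x) ⊤ μc := by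
  refine MeasureTheory.memLp_top_of_bound
    ((fourier m).continuous.aestronglyMeasurable) 1 (Filter.Eventually.of_forall fun x => ?_)
  rw [fourier_apply]
  exact le_of_eq (Circle.norm_coe _)

lemma e_def (n : ℤ) : e n = fourierLp 2 n := rfl

lemma coeFn_e (n : ℤ) : ⇑(e n) =ᵐ[μc] fun x => fourier n x := coeFn_fourierLp 2 n

lemma mulL_fourier_e (m n : ℤ) : mulL (memLp_fourier m) (e n) = e (m + n) := by
  apply MeasureTheory.Lp.ext
  filter_upwards [coeFn_mulL (memLp_fourier m) (e n), coeFn_e n, coeFn_e (m + n)]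
    with x h1 h2 h3
  rw [h1, h2, h3, ← fourier_add]

lemma e_mem_H2 (n : ℕ) : e (n : ℤ) ∈ H2 :=
  Submodule.le_topologicalClosure _ (Submodule.subset_span ⟨n, rfl⟩)

lemma e_mem_H2' {j : ℤ} (hj : 0 ≤ j) : e j ∈ H2 := by
  have := e_mem_H2 j.toNat
  rwa [Int.toNat_of_nonneg hj] at this

lemma coefL_H2 {x : L2} (hx : x ∈ H2) {j : ℤ} (hj : j < 0) : coefL j x = 0 := by
  refine inner_right_closure (S := Set.range fun n : ℕ => e (n : ℤ)) (x := e j) ?_ x hx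
  rintro _ ⟨n, rfl⟩
  have hne : j ≠ (n : ℤ) := by omega
  simpa [← coefL_apply, coefL_e, hne] using (rfl : (0:ℂ) = 0)

lemma fourierBasis_eq (i : ℤ) : (fourierBasis : HilbertBasis ℤ ℂ L2) i = e i := by
  rw [e_def, ← coe_fourierBasis]

lemma mem_H2_of_coefL {x : L2} (h : ∀ j : ℤ, j < 0 → coefL j x = 0) : x ∈ H2 := by
  have hs := (fourierBasis : HilbertBasis ℤ ℂ L2).hasSum_repr x
  refine IsClosed.mem_of_tendsto (Submodule.isClosed_topologicalClosure _) hs ?_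
  filter_upwards with s
  refine Submodule.sum_mem _ fun i _ => ?_
  rcases lt_or_ge i 0 with hi | hi
  · have hzero : (fourierBasis : HilbertBasis ℤ ℂ L2).repr x i = 0 := by
      rw [HilbertBasis.repr_apply_apply, fourierBasis_eq]
      exact h i hi
    rw [hzero, zero_smul]
    exact zero_mem _
  · refine Submodule.smul_mem _ _ ?_
    show (fourierBasis : HilbertBasis ℤ ℂ L2) i ∈ H2
    rw [fourierBasis_eq]
    exact e_mem_H2' hi

lemma Tmp (k : ℕ) (hk : 1 ≤ k) : MeasurePreserving (fun x : Circ => (k : ℤ) • x) μc μc :=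
  MeasureTheory.Measure.measurePreserving_zsmul μc
    (by exact_mod_cast (Nat.pos_of_ne_zero (by omega)).ne')

/-- The composition operator `f ↦ f(z^k)` on `L2`. -/
def Vop (k : ℕ) (hk : 1 ≤ k) : L2 →L[ℂ] L2 :=
  (MeasureTheory.Lp.compMeasurePreservingₗᵢ ℂ _ (Tmp k hk)).toContinuousLinearMap

lemma coeFn_Vop (k : ℕ) (hk : 1 ≤ k) (x : L2) :
    ⇑(Vop k hk x) =ᵐ[μc] fun y => x ((k : ℤ) • y) :=
  MeasureTheory.Lp.coeFn_compMeasurePreserving x (Tmp k hk)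

lemma Vop_e (k : ℕ) (hk : 1 ≤ k) (m : ℤ) : Vop k hk (e m) = e ((k : ℤ) * m) := by
  apply MeasureTheory.Lp.ext
  have h2 := (Tmp k hk).quasiMeasurePreserving.ae_eq_comp (coeFn_e m)
  simp only [Function.comp_def] at h2
  filter_upwards [coeFn_Vop k hk (e m), h2, coeFn_e ((k : ℤ) * m)] with x h1 h2 h3
  rw [h1, h2, h3, fourier_apply, fourier_apply, smul_smul, mul_comm]

end Aux3
section Aux4

open Submodule

local notation "⟪" x ", " y "⟫" => @inner ℂ _ _ x y

lemma inner_e_right (x : L2) (j : ℤ) :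
    @inner ℂ _ _ x (e j) = (starRingEnd ℂ) (coefL j x) := by
  rw [coefL_apply, inner_conj_symm]

lemma coefL_Vop (k : ℕ) (hk : 1 ≤ k) (j : ℤ) (x : L2) :
    coefL j (Vop k hk x) = if (k : ℤ) ∣ j then coefL (j / (k : ℤ)) x else 0 := by
  have hk0 : (k : ℤ) ≠ 0 := by exact_mod_cast (Nat.pos_of_ne_zero (by omega)).ne'
  have hbasis : ∀ n : ℤ, ((coefL j).comp (Vop k hk)) (e n)
      = (if (k : ℤ) ∣ j then coefL (j / (k : ℤ)) else 0) (e n) := by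
    intro n
    rw [ContinuousLinearMap.comp_apply, Vop_e, coefL_e]
    by_cases hd : (k : ℤ) ∣ j
    · obtain ⟨c, rfl⟩ := hd
      have h1 : ((k : ℤ) * c) / (k : ℤ) = c := Int.mul_ediv_cancel_left _ hk0
      rw [h1, if_pos (dvd_mul_right (k : ℤ) c), coefL_e]
      by_cases hcn : c = n
      · simp [hcn]
      · have hne : ¬((k : ℤ) * c = (k : ℤ) * n) := fun h => hcn (mul_left_cancel₀ hk0 h)
        rw [if_neg hne, if_neg hcn]
    · have hne : j ≠ (k : ℤ) * n := fun h => hd (h ▸ dvd_mul_right (k : ℤ) n)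
      rw [if_neg hd, if_neg hne, ContinuousLinearMap.zero_apply]
  have := clm_eq_of_basis _ _ hbasis x
  simpa [ContinuousLinearMap.comp_apply, apply_ite (fun (T : L2 →L[ℂ] ℂ) => T x),
    ContinuousLinearMap.zero_apply] using this

lemma coefL_W (k : ℕ) (hk : 1 ≤ k) (W : L2 →L[ℂ] L2) (hW : IsSlantShift k W)
    (j : ℤ) (x : L2) : coefL j (W x) = coefL ((k : ℤ) * j) x := by
  have hk0 : (k : ℤ) ≠ 0 := by exact_mod_cast (Nat.pos_of_ne_zero (by omega)).ne'
  exact clm_eq_of_basis ((coefL j).comp W) (coefL ((k : ℤ) * j)) (fun n => by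
    rw [ContinuousLinearMap.comp_apply, hW n]
    by_cases hd : (k : ℤ) ∣ n
    · obtain ⟨c, rfl⟩ := hd
      have h1 : ((k : ℤ) * c) / (k : ℤ) = c := Int.mul_ediv_cancel_left _ hk0
      rw [if_pos (dvd_mul_right (k : ℤ) c), h1, coefL_e, coefL_e]
      by_cases hjc : j = c
      · simp [hjc]
      · have hne : ¬((k : ℤ) * j = (k : ℤ) * c) := fun h => hjc (mul_left_cancel₀ hk0 h)
        rw [if_neg hjc, if_neg hne]
    · have hne : (k : ℤ) * j ≠ n := fun h => hd (h ▸ dvd_mul_right (k : ℤ) j)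
      rw [if_neg hd, map_zero, coefL_e, if_neg hne]) x

lemma inner_W_eq (k : ℕ) (hk : 1 ≤ k) (W : L2 →L[ℂ] L2) (hW : IsSlantShift k W)
    (u x : L2) : ⟪u, W x⟫ = ⟪Vop k hk u, x⟫ := by
  exact clm_eq_of_basis ((innerSL ℂ u).comp W) (innerSL ℂ (Vop k hk u)) (fun n => by
    rw [ContinuousLinearMap.comp_apply, innerSL_apply_apply, innerSL_apply_apply, hW n,
      inner_e_right, coefL_Vop]
    by_cases hd : (k : ℤ) ∣ n
    · rw [if_pos hd, if_pos hd, inner_e_right]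
    · rw [if_neg hd, if_neg hd, inner_zero_right, map_zero]) x

lemma inner_H2_zero {x : L2} (h : ∀ n : ℕ, @inner ℂ _ _ x (e (n : ℤ)) = 0) :
    ∀ v ∈ H2, @inner ℂ _ _ x v = 0 := by
  intro v hv
  exact inner_right_closure (S := Set.range fun n : ℕ => e (n : ℤ)) (x := x)
    (by rintro _ ⟨n, rfl⟩; exact h n) v hv

lemma mulL_fourier_H2' {j : ℤ} (hj : 0 ≤ j) {x : L2} (hx : x ∈ H2) :
    mulL (memLp_fourier j) x ∈ H2 := by
  refine map_closure_span _ ?_ x hx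
  rintro _ ⟨n, rfl⟩
  rw [mulL_fourier_e]
  exact e_mem_H2' (add_nonneg hj (Int.natCast_nonneg n))

lemma mulL_theta_mem {θ : Circ → ℂ} (hθ : MeasureTheory.MemLp θ ⊤ μc) {x : L2} (hx : x ∈ H2) :
    mulL hθ x ∈ (span ℂ (thetaSet θ)).topologicalClosure := by
  refine map_closure_span (mulL hθ) ?_ x hx
  rintro _ ⟨n, rfl⟩
  refine Submodule.le_topologicalClosure _ (Submodule.subset_span ⟨n, ?_⟩)
  filter_upwards [coeFn_mulL hθ (e (n : ℤ)), coeFn_e (n : ℤ)] with x h1 h2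
  rw [h1, h2]

lemma ortho_theta {θ : Circ → ℂ} {x v : L2} (hx : x ∈ (span ℂ (thetaSet θ))ᗮ)
    (hv : v ∈ (span ℂ (thetaSet θ)).topologicalClosure) : ⟪v, x⟫ = 0 := by
  have h := inner_right_closure (S := thetaSet θ) (x := x) (fun s hs =>
    (Submodule.mem_orthogonal' _ x).mp hx s (Submodule.subset_span hs)) v hv
  rw [← inner_conj_symm, h, map_zero]

end Aux4
/-- if φ = conj(α h₁) + β(z^k) h₂ with h₁, h₂ ∈ H², then
U_φ^{α,β} f = P_β W_k(φ f) = 0 for every f ∈ K_α ∩ H^∞. -/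
theorem symbol_zero_operator (k : ℕ) (hk : 1 ≤ k) (α β : Circ → ℂ)
    (hα : IsInnerFun α) (hβ : IsInnerFun β)
    (W : L2 →L[ℂ] L2) (hW : IsSlantShift k W)
    (φ : Circ → ℂ) (hφ : MemLp φ 2 μc)
    (h₁ h₂ : L2) (hh₁ : h₁ ∈ H2) (hh₂ : h₂ ∈ H2)
    (hrep : φ =ᵐ[μc] fun x => (starRingEnd ℂ) (α x * h₁ x) + β ((k : ℤ) • x) * h₂ x)
    (f : L2) (hf : f ∈ Kmodel α) (hfb : MemLp (⇑f) ⊤ μc)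
    (g : L2) (hg : ⇑g =ᵐ[μc] fun x => φ x * f x) :
    Pmod β (W g) = 0 := by
  classical
  have hk0 : (0 : ℤ) < (k : ℤ) := by exact_mod_cast Nat.pos_of_ne_zero (by omega)
  have hf' : f ∈ H2 ⊓ (Submodule.span ℂ (thetaSet α))ᗮ := hf
  obtain ⟨hf2, hfo⟩ := Submodule.mem_inf.mp hf'
  have hαi := hα.1
  have hβi := hβ.1
  have hβT : MemLp (fun x : Circ => β ((k : ℤ) • x)) ⊤ μc :=
    hβi.comp_measurePreserving (Tmp k hk)
  have hg1m : MemLp (fun x => (starRingEnd ℂ) (α x * h₁ x) * f x) 2 μc :=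
    memLp_mul_right (memLp_conj (memLp_mul_left hαi (Lp.memLp h₁))) hfb
  have hh2fm : MemLp (fun x => h₂ x * f x) 2 μc := memLp_mul_right (Lp.memLp h₂) hfb
  have hg2m : MemLp (fun x => β ((k : ℤ) • x) * (h₂ x * f x)) 2 μc := memLp_mul_left hβT hh2fm
  set g1 : L2 := hg1m.toLp _ with hg1def
  set g2 : L2 := hg2m.toLp _ with hg2def
  set h2f : L2 := hh2fm.toLp _ with hh2fdef
  have hsplit : g = g1 + g2 := by
    apply MeasureTheory.Lp.ext
    filter_upwards [hg, hrep, hg1m.coeFn_toLp, hg2m.coeFn_toLp, Lp.coeFn_add g1 g2]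
      with x h1 h2 h3 h4 h5
    rw [h5]
    simp only [Pi.add_apply]
    rw [h1, h2, h3, h4]
    ring
  suffices hmem : W g ∈ (Kmodel β)ᗮ by
    have h0 : Submodule.orthogonalProjection (Kmodel β) (W g) = 0 := by
      rwa [Submodule.orthogonalProjection_eq_zero_iff]
    simp only [Pmod, ContinuousLinearMap.comp_apply, h0, map_zero]
  rw [Submodule.mem_orthogonal]
  intro u hu
  have hu' : u ∈ H2 ⊓ (Submodule.span ℂ (thetaSet β))ᗮ := hu
  obtain ⟨hu1, hu2⟩ := Submodule.mem_inf.mp hu'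
  rw [hsplit, map_add, inner_add_right]
  have hpart1 : @inner ℂ _ _ u (W g1) = 0 := by
    have hc1 : ∀ m : ℤ, 0 ≤ m → coefL m g1 = 0 := by
      intro m hm
      have hr : coefL m g1 = @inner ℂ _ _ (mulL hαi (mulL (memLp_fourier m) h₁)) f := by
        rw [coefL_apply, inner_def', inner_def']
        refine integral_congr_ae ?_
        filter_upwards [hg1m.coeFn_toLp, coeFn_e m, coeFn_mulL hαi (mulL (memLp_fourier m) h₁),
          coeFn_mulL (memLp_fourier m) h₁] with x k1 k2 k3 k4
        rw [k1, k2, k3, k4]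
        simp only [map_mul]
        ring
      rw [hr]
      exact ortho_theta hfo (mulL_theta_mem hαi (mulL_fourier_H2' hm hh₁))
    have hWg1 : ∀ v ∈ H2, @inner ℂ _ _ (W g1) v = 0 := by
      refine inner_H2_zero fun n => ?_
      rw [inner_e_right, coefL_W k hk W hW, hc1 _ (mul_nonneg hk0.le (Int.natCast_nonneg n)),
        map_zero]
    rw [← inner_conj_symm, hWg1 u hu1, map_zero]
  have hpart2 : @inner ℂ _ _ u (W g2) = 0 := by
    set q : L2 := mulL (memLp_conj hβi) u with hqdef
    have hq : ∀ m : ℤ, 0 ≤ m → coefL m q = 0 := by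
      intro m hm
      have hb : coefL m q = @inner ℂ _ _ (mulL hβi (e m)) u := by
        rw [coefL_apply, inner_def', inner_def']
        refine integral_congr_ae ?_
        filter_upwards [coeFn_mulL (memLp_conj hβi) u, coeFn_mulL hβi (e m), coeFn_e m]
          with x k1 k2 k3
        rw [k1, k2, k3]
        simp only [map_mul]
        ring
      have hbm : mulL hβi (e m) ∈ Submodule.span ℂ (thetaSet β) := by
        refine Submodule.subset_span ⟨m.toNat, ?_⟩
        rw [Int.toNat_of_nonneg hm]
        filter_upwards [coeFn_mulL hβi (e m), coeFn_e m] with x k1 k2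
        rw [k1, k2]
      rw [hb]
      exact (Submodule.mem_orthogonal _ u).mp hu2 _ hbm
    have hWV : @inner ℂ _ _ u (W g2) = @inner ℂ _ _ (Vop k hk u) g2 :=
      inner_W_eq k hk W hW u g2
    have hmid : @inner ℂ _ _ (Vop k hk u) g2 = @inner ℂ _ _ (Vop k hk q) h2f := by
      rw [inner_def', inner_def']
      refine integral_congr_ae ?_
      have h0 : ⇑q =ᵐ[μc] fun x => (starRingEnd ℂ) (β x) * u x := coeFn_mulL (memLp_conj hβi) u
      have hqT := (Tmp k hk).quasiMeasurePreserving.ae_eq_comp h0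
      simp only [Function.comp_def] at hqT
      filter_upwards [coeFn_Vop k hk u, coeFn_Vop k hk q, hqT, hg2m.coeFn_toLp,
        hh2fm.coeFn_toLp] with x k1 k2 k3 k4 k5
      rw [k1, k4, k2, k3, k5]
      simp only [map_mul, Complex.conj_conj]
      ring
    have hVq : ∀ v ∈ H2, @inner ℂ _ _ (Vop k hk q) v = 0 := by
      refine inner_H2_zero fun n => ?_
      rw [inner_e_right, coefL_Vop]
      by_cases hd : (k : ℤ) ∣ (n : ℤ)
      · rw [if_pos hd, hq _ (Int.ediv_nonneg (Int.natCast_nonneg n) hk0.le), map_zero]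
      · rw [if_neg hd, map_zero]
    have hh2f : h2f ∈ H2 := by
      refine mem_H2_of_coefL fun j hj => ?_
      have hwc : coefL j h2f = @inner ℂ _ _ (mulL (memLp_conj hfb) (e j)) h₂ := by
        rw [coefL_apply, inner_def', inner_def']
        refine integral_congr_ae ?_
        filter_upwards [hh2fm.coeFn_toLp, coeFn_mulL (memLp_conj hfb) (e j), coeFn_e j]
          with x k1 k2 k3
        rw [k1, k2, k3]
        simp only [map_mul, Complex.conj_conj]
        ring
      have hwH : ∀ v ∈ H2, @inner ℂ _ _ (mulL (memLp_conj hfb) (e j)) v = 0 := by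
        refine inner_H2_zero fun n => ?_
        have heq : @inner ℂ _ _ (mulL (memLp_conj hfb) (e j)) (e (n : ℤ))
            = coefL j (mulL (memLp_fourier (n : ℤ)) f) := by
          rw [coefL_apply, inner_def', inner_def']
          refine integral_congr_ae ?_
          filter_upwards [coeFn_mulL (memLp_conj hfb) (e j), coeFn_e j, coeFn_e (n : ℤ),
            coeFn_mulL (memLp_fourier (n : ℤ)) f] with x k1 k2 k3 k4
          rw [k1, k2, k3, k4]
          simp only [map_mul, Complex.conj_conj]
          ring
        rw [heq, coefL_H2 (mulL_fourier_H2' (Int.natCast_nonneg n) hf2) hj]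
      rw [hwc]
      exact hwH h₂ hh₂
    rw [hWV, hmid]
    exact hVq h2f hh2f
  rw [hpart1, hpart2, add_zero]
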